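/- For the algebra U of affiliated operators of a finite von Neumann algebra, the torsion theory (T, P) of zero-dimensional modules coincides with the Lambek torsion theory, the Goldie torsion theory, and the torsion theory (bnd, unb) cogenerated by U: a U-module M satisfies dim_U(M) = 0 if and only if Hom_U(M, U) restricted to every submodule vanishes (i.e., M is singular, equivalently Hom_U(M, E(U)) = 0). -/

import Mathlib

open scoped ENNReal

/-- An abstraction of the pair `A ⊆ U = U(A)`, where `A` is a finite von Neumann algebra
(with a fixed normal faithful trace) and `U` is its algebra of affiliated operators,
together with the trace-induced dimension functions on `A`- and on `U`-modules.
The fields record the facts used in the paper: `U` is the classical ring of quotients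
of `A`, `U` is von Neumann regular and self-injective, and the dimensions are
isomorphism-invariant, additive on short exact sequences, continuous with respect to
suprema over finitely generated projective submodules, and faithful on finitely
generated projective modules. -/
structure AffiliatedOperatorsSetup (A U : Type) [Ring A] [Ring U] where
  /-- the inclusion of `A` into `U` -/
  incl : A →+* U
  incl_injective : Function.Injective incl
  /-- `U` is von Neumann regular -/
  regular : ∀ u : U, ∃ x : U, u * x * u = u
  /-- `U` is self-injective -/
  selfInjective : Module.Injective U U
  /-- every element of `U` is a left fraction `s⁻¹ a` with `a, s ∈ A`, `s` regular:
  `U = Q_cl(A)` -/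
  fraction : ∀ u : U, ∃ a s : A,
      (∀ b : A, s * b = 0 → b = 0) ∧ (∀ b : A, b * s = 0 → b = 0) ∧
      incl s * u = incl a
  /-- regular elements of `A` become invertible in `U` -/
  regularUnit : ∀ s : A, (∀ b : A, s * b = 0 → b = 0) → (∀ b : A, b * s = 0 → b = 0) →
      IsUnit (incl s)
  /-- the trace-induced dimension of an `A`-module -/
  dimA : ∀ (M : Type) [AddCommGroup M] [Module A M], ℝ≥0∞
  /-- the trace-induced dimension of a `U`-module -/
  dimU : ∀ (M : Type) [AddCommGroup M] [Module U M], ℝ≥0∞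
  dimA_congr : ∀ (M N : Type) [AddCommGroup M] [Module A M] [AddCommGroup N] [Module A N],
      (M ≃ₗ[A] N) → dimA M = dimA N
  dimU_congr : ∀ (M N : Type) [AddCommGroup M] [Module U M] [AddCommGroup N] [Module U N],
      (M ≃ₗ[U] N) → dimU M = dimU N
  dimA_add : ∀ (M : Type) [AddCommGroup M] [Module A M] (N : Submodule A M),
      dimA M = dimA ↥N + dimA (M ⧸ N)
  dimU_add : ∀ (M : Type) [AddCommGroup M] [Module U M] (N : Submodule U M),
      dimU M = dimU ↥N + dimU (M ⧸ N)
  dimA_sup : ∀ (M : Type) [AddCommGroup M] [Module A M],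
      dimA M = ⨆ (N : Submodule A M) (_ : N.FG ∧ Module.Projective A ↥N), dimA ↥N
  dimU_sup : ∀ (M : Type) [AddCommGroup M] [Module U M],
      dimU M = ⨆ (N : Submodule U M) (_ : N.FG ∧ Module.Projective U ↥N), dimU ↥N
  dimA_faithful : ∀ (M : Type) [AddCommGroup M] [Module A M],
      Module.Finite A M → Module.Projective A M → (dimA M = 0 ↔ Subsingleton M)
  dimU_faithful : ∀ (M : Type) [AddCommGroup M] [Module U M],
      Module.Finite U M → Module.Projective U M → (dimU M = 0 ↔ Subsingleton M)


/-- dim of a submodule is at most the dim of the module. -/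
theorem AffiliatedOperatorsSetup.dimU_le_of_submodule {A U : Type} [Ring A] [Ring U]
    (S : AffiliatedOperatorsSetup A U)
    (M : Type) [AddCommGroup M] [Module U M] (N : Submodule U M) :
    S.dimU ↥N ≤ S.dimU M := by
  rw [S.dimU_add M N]
  exact le_self_add

/-- dim is monotone along surjections. -/
theorem AffiliatedOperatorsSetup.dimU_le_of_surjective {A U : Type} [Ring A] [Ring U]
    (S : AffiliatedOperatorsSetup A U)
    (M₁ M₂ : Type) [AddCommGroup M₁] [Module U M₁] [AddCommGroup M₂] [Module U M₂]
    (f : M₁ →ₗ[U] M₂) (hf : Function.Surjective f) :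
    S.dimU M₂ ≤ S.dimU M₁ := by
  rw [S.dimU_add M₁ (LinearMap.ker f)]
  rw [S.dimU_congr (M₁ ⧸ LinearMap.ker f) M₂ (f.quotKerEquivOfSurjective hf)]
  exact le_add_self

/-- dim is monotone on submodules. -/
theorem AffiliatedOperatorsSetup.dimU_mono {A U : Type} [Ring A] [Ring U]
    (S : AffiliatedOperatorsSetup A U)
    (M : Type) [AddCommGroup M] [Module U M] {N₁ N₂ : Submodule U M} (h : N₁ ≤ N₂) :
    S.dimU ↥N₁ ≤ S.dimU ↥N₂ := by
  have e := Submodule.comapSubtypeEquivOfLe h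
  calc S.dimU ↥N₁ = S.dimU ↥(N₁.comap N₂.subtype) := (S.dimU_congr _ _ e).symm
    _ ≤ S.dimU ↥N₂ := S.dimU_le_of_submodule ↥N₂ _

/-- for the algebra `U` of affiliated operators of a finite von Neumann
algebra, the torsion theory `(T, P)` of zero-dimensional modules coincides with the
Lambek torsion theory, the Goldie torsion theory and the torsion theory `(bnd, unb)`
cogenerated by `U`: a `U`-module `M` satisfies `dim_U(M) = 0` if and only if
`Hom_U(N, U) = 0` for every submodule `N` of `M` (i.e. `M` is singular, equivalently
`Hom_U(M, E(U)) = 0`, since `E(U) = U`). -/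
theorem dim_zero_iff_every_submodule_bounded (A U : Type) [Ring A] [Ring U]
    (S : AffiliatedOperatorsSetup A U)
    (M : Type) [AddCommGroup M] [Module U M] :
    S.dimU M = 0 ↔ ∀ (N : Submodule U M) (f : ↥N →ₗ[U] U), f = 0 := by
  constructor
  · intro hdim N f
    by_contra hf
    -- pick an element where `f` is nonzero
    obtain ⟨n, hn⟩ : ∃ n : ↥N, f n ≠ 0 := by
      by_contra h
      push_neg at h
      exact hf (LinearMap.ext fun x => h x)
    set u : U := f n with hu
    -- dim of N is zero
    have hdimN : S.dimU ↥N = 0 := by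
      have := S.dimU_add M N
      rw [hdim] at this
      exact (add_eq_zero.mp this.symm).1
    -- dim of the range of f is zero
    have hdimR : S.dimU ↥(LinearMap.range f) = 0 := by
      refine le_antisymm ?_ zero_le
      calc S.dimU ↥(LinearMap.range f) ≤ S.dimU ↥N :=
            S.dimU_le_of_surjective _ _ f.rangeRestrict f.surjective_rangeRestrict
        _ = 0 := hdimN
    -- the cyclic submodule generated by u has dim zero
    have huR : u ∈ LinearMap.range f := ⟨n, rfl⟩
    have hspan : (Submodule.span U {u} : Submodule U U) ≤ LinearMap.range f := by
      rw [Submodule.span_le]; simpa using huR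
    have hdimspan : S.dimU ↥(Submodule.span U {u} : Submodule U U) = 0 :=
      le_antisymm (le_trans (S.dimU_mono U hspan) (le_of_eq hdimR)) zero_le
    -- regularity: get an idempotent e with span {u} = span {e}
    obtain ⟨x, hx⟩ := S.regular u
    set e : U := x * u with he
    have hee : e * e = e := by
      rw [he]
      calc x * u * (x * u) = x * (u * x * u) := by simp only [mul_assoc]
        _ = x * u := by rw [hx]
    have hue : u * e = u := by
      rw [he, ← mul_assoc, hx]
    have hespan : e ∈ (Submodule.span U {u} : Submodule U U) := by
      have : e = x • u := by rw [he]; rfl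
      rw [this]
      exact Submodule.smul_mem _ _ (Submodule.subset_span rfl)
    have huspan : u ∈ (Submodule.span U {e} : Submodule U U) := by
      have : u = u • e := by rw [smul_eq_mul, hue]
      rw [this]
      exact Submodule.smul_mem _ _ (Submodule.subset_span rfl)
    have hspaneq : (Submodule.span U {u} : Submodule U U) = Submodule.span U {e} := by
      apply le_antisymm
      · rw [Submodule.span_le]; simpa using huspan
      · rw [Submodule.span_le]; simpa using hespan
    -- span {e} is f.g. projective
    set P : Submodule U U := Submodule.span U {e} with hP
    have hPfg : P.FG := Submodule.fg_span_singleton e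
    have hmem : ∀ v ∈ P, v * e = v := by
      intro v hv
      obtain ⟨c, hc⟩ := Submodule.mem_span_singleton.mp hv
      rw [← hc, smul_eq_mul, mul_assoc, hee]
    have hmem' : ∀ v ∈ P, v • e = v := fun v hv => by
      rw [smul_eq_mul]; exact hmem v hv
    have hproj : Module.Projective U ↥P := by
      refine Module.Projective.of_split (M := U) P.subtype
        ((LinearMap.toSpanSingleton U U e).codRestrict P
          (fun r => Submodule.smul_mem _ _ (Submodule.subset_span rfl))) ?_
      ext ⟨v, hv⟩
      simp only [LinearMap.comp_apply, LinearMap.codRestrict_apply, Submodule.subtype_apply,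
        LinearMap.toSpanSingleton_apply, LinearMap.id_apply]
      exact hmem' v hv
    have hfin : Module.Finite U ↥P := Module.Finite.iff_fg.mpr hPfg
    have hsub : Subsingleton ↥P := by
      rw [← S.dimU_faithful ↥P hfin hproj, ← hspaneq]
      exact hdimspan
    have he0 : e = 0 := by
      have h1 : (⟨e, Submodule.subset_span rfl⟩ : ↥P) = 0 := Subsingleton.elim _ _
      exact congrArg Subtype.val h1
    apply hn
    show u = 0
    rw [← hue, he0, mul_zero]
  · intro hbnd
    rw [S.dimU_sup M]
    refine le_antisymm ?_ zero_le
    refine iSup_le fun N => iSup_le fun hN => ?_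
    obtain ⟨hNfg, hNproj⟩ := hN
    have hfin : Module.Finite U ↥N := Module.Finite.iff_fg.mpr hNfg
    have hsub : Subsingleton ↥N := by
      obtain ⟨s, hs⟩ := Module.projective_def'.mp hNproj
      have hs0 : s = 0 := by
        ext v a
        have : (Finsupp.lapply a) ∘ₗ s = 0 := hbnd N _
        have := LinearMap.congr_fun this v
        simpa using this
      constructor
      intro a b
      have ha := LinearMap.congr_fun hs a
      have hb := LinearMap.congr_fun hs b
      rw [hs0] at ha hb
      simp at ha hb
      rw [← ha, ← hb]
    exact le_of_eq ((S.dimU_faithful ↥N hfin hNproj).mpr hsub)
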